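/- Let (W_t)_{t≥0} be a standard one-dimensional Brownian motion. For λ > 0 and t ≥ 0 define, pathwise, Z_λ(t) = ∫₀ᵗ λ e^{−λ(t−s)} (W(t) − W(s)) ds + e^{−λt} W(t) (this equals the stochastic convolution ∫₀ᵗ e^{−λ(t−s)} dW(s)). Then for every δ ∈ (0,1/2) and T > 0 there exist constants C₁, C₂ > 0, depending only on δ and T, such that for all λ > 0 and R ≥ 0, P( sup_{0 ≤ t ≤ T} Z_λ(t) ≥ λ^{−δ} R ) ≤ C₁ e^{−C₂ R²}. -/

import Mathlib

open MeasureTheory Set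

/-- The pathwise exponential stochastic convolution
`Z_λ(t) = ∫₀ᵗ λ e^{−λ(t−s)} (W(t) − W(s)) ds + e^{−λt} W(t)`
(the integration-by-parts representation of `∫₀ᵗ e^{−λ(t−s)} dW(s)`). -/
noncomputable def stochConv {Ω : Type*} (W : ℝ → Ω → ℝ) (lam t : ℝ) (ω : Ω) : ℝ :=
  (∫ s in (0:ℝ)..t, lam * Real.exp (-lam * (t - s)) * (W t ω - W s ω))
    + Real.exp (-lam * t) * W t ω

section helpers
open MeasureTheory Set Real

lemma h_rpow_le (H : ℝ) (hH : 0 < H) (hH1 : H ≤ 1) {x : ℝ} (hx : 0 ≤ x) :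
    x ^ H ≤ 1 + x := by
  rcases le_total x 1 with h | h
  · calc x ^ H ≤ 1 := Real.rpow_le_one hx h hH.le
    _ ≤ 1 + x := by linarith
  · calc x ^ H ≤ x ^ (1:ℝ) := Real.rpow_le_rpow_of_exponent_le h hH1
    _ = x := Real.rpow_one x
    _ ≤ 1 + x := by linarith

lemma h_one_add_exp {x : ℝ} (hx : 0 ≤ x) : (1 + x) * Real.exp (-x) ≤ 1 := by
  have h := Real.add_one_le_exp x
  have h2 : Real.exp (-x) * Real.exp x = 1 := by rw [← Real.exp_add]; simp
  nlinarith [Real.exp_pos (-x), Real.exp_pos x]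

lemma h_one_add_exp_half {x : ℝ} (hx : 0 ≤ x) :
    (1 + x) * Real.exp (-x) ≤ 2 * Real.exp (-x/2) := by
  have h := Real.add_one_le_exp (x/2)
  have h2 : Real.exp (-x) = Real.exp (-x/2) * Real.exp (-x/2) := by
    rw [← Real.exp_add]; ring_nf
  have h4 : Real.exp (-x/2) * Real.exp (x/2) = 1 := by rw [← Real.exp_add]; ring_nf; simp
  have h3 : (1+x) * Real.exp (-x/2) ≤ 2 := by
    nlinarith [Real.exp_pos (-x/2), Real.exp_pos (x/2)]
  calc (1+x) * Real.exp (-x) = ((1+x) * Real.exp (-x/2)) * Real.exp (-x/2) := by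
        rw [h2]; ring
    _ ≤ 2 * Real.exp (-x/2) := by
        have := Real.exp_pos (-x/2)
        nlinarith

lemma h_uH_le {lam u H : ℝ} (hl : 0 < lam) (hu : 0 ≤ u) (hH : 0 < H) (hH1 : H ≤ 1) :
    u ^ H ≤ lam ^ (-H) * (1 + lam * u) := by
  have h1 : (lam * u) ^ H ≤ 1 + lam * u := h_rpow_le H hH hH1 (by positivity)
  have h2 : (lam * u) ^ H = lam ^ H * u ^ H := Real.mul_rpow hl.le hu
  have h3 : lam ^ (-H) * lam ^ H = 1 := by
    rw [← Real.rpow_add hl]; simp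
  calc u ^ H = lam ^ (-H) * (lam ^ H * u ^ H) := by rw [← mul_assoc, h3, one_mul]
  _ ≤ lam ^ (-H) * (1 + lam * u) := by
      rw [← h2]
      exact mul_le_mul_of_nonneg_left h1 (by positivity)

-- combined pointwise bound
lemma h_pointwise {lam u H : ℝ} (hl : 0 < lam) (hu : 0 ≤ u) (hH : 0 < H) (hH1 : H ≤ 1) :
    lam * Real.exp (-(lam * u)) * u ^ H ≤ 2 * lam ^ (1 - H) * Real.exp (-(lam*u)/2) := by
  have h1 : u ^ H ≤ lam ^ (-H) * (1 + lam * u) := h_uH_le hl hu hH hH1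
  have h2 : (1 + lam*u) * Real.exp (-(lam*u)) ≤ 2 * Real.exp (-(lam*u)/2) :=
    h_one_add_exp_half (by positivity)
  have h3 : lam * lam ^ (-H) = lam ^ (1-H) := by
    rw [show (1:ℝ)-H = 1 + (-H) by ring, Real.rpow_add hl, Real.rpow_one]
  calc lam * Real.exp (-(lam*u)) * u ^ H
      ≤ lam * Real.exp (-(lam*u)) * (lam ^ (-H) * (1 + lam*u)) := by
        refine mul_le_mul_of_nonneg_left h1 ?_
        positivity
    _ = (lam * lam ^ (-H)) * ((1 + lam*u) * Real.exp (-(lam*u))) := by ring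
    _ ≤ (lam * lam ^ (-H)) * (2 * Real.exp (-(lam*u)/2)) := by
        refine mul_le_mul_of_nonneg_left h2 ?_
        positivity
    _ = 2 * lam ^ (1-H) * Real.exp (-(lam*u)/2) := by rw [h3]; ring

lemma h_tH_exp {lam t H : ℝ} (hl : 0 < lam) (ht : 0 ≤ t) (hH : 0 < H) (hH1 : H ≤ 1) :
    t ^ H * Real.exp (-(lam * t)) ≤ lam ^ (-H) := by
  have h1 : t ^ H ≤ lam ^ (-H) * (1 + lam * t) := h_uH_le hl ht hH hH1
  have h2 : (1 + lam*t) * Real.exp (-(lam*t)) ≤ 1 := h_one_add_exp (by positivity)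
  have hlH : (0:ℝ) < lam ^ (-H) := Real.rpow_pos_of_pos hl _
  calc t ^ H * Real.exp (-(lam*t)) ≤ (lam ^ (-H) * (1 + lam*t)) * Real.exp (-(lam*t)) := by
        refine mul_le_mul_of_nonneg_right h1 (Real.exp_pos _).le
    _ = lam ^ (-H) * ((1 + lam*t) * Real.exp (-(lam*t))) := by ring
    _ ≤ lam ^ (-H) * 1 := mul_le_mul_of_nonneg_left h2 hlH.le
    _ = lam ^ (-H) := mul_one _

-- exponential integral bound
lemma h_int_exp {c t : ℝ} (hc : 0 < c) (ht : 0 ≤ t) :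
    ∫ u in (0:ℝ)..t, Real.exp (-(c*u)) ≤ 1/c := by
  have hderiv : ∀ u ∈ Set.uIcc (0:ℝ) t, HasDerivAt (fun u => -(1/c) * Real.exp (-(c*u)))
      (Real.exp (-(c*u))) u := by
    intro u _
    have h : HasDerivAt (fun u : ℝ => -(c*u)) (-c) u := by
      simpa using ((hasDerivAt_id u).const_mul (-c))
    have := (Real.hasDerivAt_exp (-(c*u))).comp u h
    have h2 := this.const_mul (-(1/c))
    rw [show -(1/c) * (Real.exp (-(c*u)) * -c) = Real.exp (-(c*u)) * (c/c) by ring,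
      div_self hc.ne', mul_one] at h2
    exact h2
  have hint : IntervalIntegrable (fun u => Real.exp (-(c*u))) volume 0 t := by
    apply Continuous.intervalIntegrable
    continuity
  rw [intervalIntegral.integral_eq_sub_of_hasDerivAt hderiv hint]
  have h1 : Real.exp (-(c*t)) ≤ 1 := Real.exp_le_one_iff.mpr (by nlinarith)
  have h2 : (0:ℝ) < Real.exp (-(c*t)) := Real.exp_pos _
  simp only [mul_zero, neg_zero, Real.exp_zero]
  rw [div_eq_mul_inv, one_mul]
  nlinarith [mul_pos (inv_pos.mpr hc) h2]

end helpers
section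
open MeasureTheory Set Real
variable {f : ℝ → ℝ} {T H C lam t : ℝ}

lemma conv_bound (hT : 0 < T) (hH : 0 < H) (hH1 : H < 1)
    (hf : ContinuousOn f (Set.Ici 0)) (hf0 : f 0 = 0) (hC : 0 ≤ C)
    (hHol : ∀ s t : ℝ, 0 ≤ s → s ≤ t → t ≤ T → |f t - f s| ≤ C * (t - s) ^ H)
    (hl : 0 < lam) (ht0 : 0 ≤ t) (htT : t ≤ T) :
    (∫ s in (0:ℝ)..t, lam * Real.exp (-lam * (t - s)) * (f t - f s)) + Real.exp (-lam * t) * f t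
      ≤ min (5 * C * lam ^ (-H)) (2 * C * T ^ H) := by
  have hfc : ContinuousOn f (Set.Icc 0 t) := hf.mono (fun x hx => hx.1)
  set g : ℝ → ℝ := fun s => lam * Real.exp (-lam * (t - s)) * (f t - f s) with hg
  have hgc : ContinuousOn g (Set.uIcc 0 t) := by
    rw [Set.uIcc_of_le ht0]
    apply ContinuousOn.mul ?_ (continuousOn_const.sub hfc)
    apply Continuous.continuousOn
    fun_prop
  -- second term bounds
  have habsft : |f t| ≤ C * t ^ H := by
    have := hHol 0 t le_rfl ht0 htT
    rwa [hf0, sub_zero, sub_zero] at this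
  have hsec1 : Real.exp (-lam * t) * f t ≤ C * lam ^ (-H) := by
    calc Real.exp (-lam * t) * f t ≤ Real.exp (-lam * t) * |f t| :=
          mul_le_mul_of_nonneg_left (le_abs_self _) (Real.exp_pos _).le
    _ ≤ Real.exp (-lam * t) * (C * t ^ H) :=
          mul_le_mul_of_nonneg_left habsft (Real.exp_pos _).le
    _ = C * (t ^ H * Real.exp (-(lam * t))) := by rw [neg_mul]; ring
    _ ≤ C * lam ^ (-H) := mul_le_mul_of_nonneg_left (h_tH_exp hl ht0 hH hH1.le) hC
  have hsec2 : Real.exp (-lam * t) * f t ≤ C * T ^ H := by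
    have h1 : Real.exp (-lam * t) ≤ 1 := Real.exp_le_one_iff.mpr (by nlinarith)
    have h2 : t ^ H ≤ T ^ H := Real.rpow_le_rpow ht0 htT hH.le
    have h3 : |f t| ≤ C * T ^ H :=
      habsft.trans (mul_le_mul_of_nonneg_left h2 hC)
    calc Real.exp (-lam * t) * f t ≤ Real.exp (-lam * t) * |f t| :=
          mul_le_mul_of_nonneg_left (le_abs_self _) (Real.exp_pos _).le
    _ ≤ 1 * (C * T ^ H) := by
          apply mul_le_mul h1 h3 (abs_nonneg _) zero_le_one
    _ = C * T ^ H := one_mul _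
  -- generic machinery for integral bounds
  have key : ∀ b : ℝ → ℝ, Continuous b → (∀ s ∈ Set.Ioc (0:ℝ) t, ‖g s‖ ≤ b s) →
      ‖∫ s in (0:ℝ)..t, g s‖ ≤ |∫ s in (0:ℝ)..t, b s| := by
    intro b hb hbb
    refine intervalIntegral.norm_integral_le_abs_of_norm_le ?_ (hb.intervalIntegrable 0 t)
    refine (ae_restrict_mem measurableSet_uIoc).mono (fun s hs => ?_)
    exact hbb s (by rwa [Set.uIoc_of_le ht0] at hs)
  -- claim A
  have claimA : ‖∫ s in (0:ℝ)..t, g s‖ ≤ 4 * C * lam ^ (-H) := by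
    have hbA : ∀ s ∈ Set.Ioc (0:ℝ) t, ‖g s‖ ≤
        C * (2 * lam ^ (1-H) * Real.exp (-(lam/2 * (t - s)))) := by
      intro s hs
      have h1 : (0:ℝ) ≤ t - s := by linarith [hs.2]
      have hp := h_pointwise (u := t - s) hl h1 hH hH1.le
      calc ‖g s‖ = (lam * Real.exp (-lam * (t-s))) * |f t - f s| := by
            rw [Real.norm_eq_abs, hg, abs_mul, abs_of_nonneg (by positivity)]
      _ ≤ (lam * Real.exp (-lam * (t-s))) * (C * (t-s) ^ H) :=
            mul_le_mul_of_nonneg_left (hHol s t hs.1.le hs.2 htT) (by positivity)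
      _ = C * (lam * Real.exp (-(lam * (t-s))) * (t-s) ^ H) := by
            rw [neg_mul]; ring
      _ ≤ C * (2 * lam ^ (1-H) * Real.exp (-(lam * (t-s))/2)) :=
            mul_le_mul_of_nonneg_left hp hC
      _ = C * (2 * lam ^ (1-H) * Real.exp (-(lam/2 * (t - s)))) := by
            congr 2; ring
    have hbAcont : Continuous (fun s => C * (2 * lam ^ (1-H) * Real.exp (-(lam/2 * (t - s))))) := by
      fun_prop
    have h1 := key _ hbAcont hbA
    have intA : (∫ s in (0:ℝ)..t, C * (2 * lam ^ (1-H) * Real.exp (-(lam/2 * (t - s)))))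
        = C * (2 * lam ^ (1-H)) * ∫ s in (0:ℝ)..t, Real.exp (-(lam/2 * (t - s))) := by
      rw [← intervalIntegral.integral_const_mul]
      congr 1; ext s; ring
    have subst : (∫ s in (0:ℝ)..t, Real.exp (-(lam/2 * (t - s))))
        = ∫ u in (0:ℝ)..t, Real.exp (-(lam/2 * u)) := by
      have h := intervalIntegral.integral_comp_sub_left
        (a := (0:ℝ)) (b := t) (fun u => Real.exp (-(lam/2 * u))) t
      simpa using h
    have hI0 : (0:ℝ) ≤ ∫ u in (0:ℝ)..t, Real.exp (-(lam/2 * u)) :=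
      intervalIntegral.integral_nonneg ht0 (fun u _ => (Real.exp_pos _).le)
    have hI2 : (∫ u in (0:ℝ)..t, Real.exp (-(lam/2 * u))) ≤ 1/(lam/2) :=
      h_int_exp (by positivity) ht0
    have hcoef : (0:ℝ) ≤ C * (2 * lam ^ (1-H)) := by positivity
    have e1 : C * (2 * lam ^ (1-H)) * (1/(lam/2)) = 4 * C * lam ^ (-H) := by
      have h3 : lam ^ (1-H : ℝ) = lam * lam ^ (-H) := by
        rw [show (1:ℝ)-H = 1 + (-H) by ring, Real.rpow_add hl, Real.rpow_one]
      rw [h3]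
      field_simp
      ring
    calc ‖∫ s in (0:ℝ)..t, g s‖ ≤ |∫ s in (0:ℝ)..t,
          C * (2 * lam ^ (1-H) * Real.exp (-(lam/2 * (t - s))))| := h1
    _ = C * (2 * lam ^ (1-H)) * ∫ u in (0:ℝ)..t, Real.exp (-(lam/2 * u)) := by
          rw [intA, subst, abs_of_nonneg (mul_nonneg hcoef hI0)]
    _ ≤ C * (2 * lam ^ (1-H)) * (1/(lam/2)) := mul_le_mul_of_nonneg_left hI2 hcoef
    _ = 4 * C * lam ^ (-H) := e1
  -- claim B
  have claimB : ‖∫ s in (0:ℝ)..t, g s‖ ≤ C * T ^ H := by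
    have hbB : ∀ s ∈ Set.Ioc (0:ℝ) t, ‖g s‖ ≤
        C * T ^ H * (lam * Real.exp (-(lam * (t - s)))) := by
      intro s hs
      have h1 : (0:ℝ) ≤ t - s := by linarith [hs.2]
      have h2 : (t - s) ^ H ≤ T ^ H := Real.rpow_le_rpow h1 (by linarith [hs.1]) hH.le
      calc ‖g s‖ = (lam * Real.exp (-lam * (t-s))) * |f t - f s| := by
            rw [Real.norm_eq_abs, hg, abs_mul, abs_of_nonneg (by positivity)]
      _ ≤ (lam * Real.exp (-lam * (t-s))) * (C * (t-s) ^ H) :=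
            mul_le_mul_of_nonneg_left (hHol s t hs.1.le hs.2 htT) (by positivity)
      _ ≤ (lam * Real.exp (-lam * (t-s))) * (C * T ^ H) := by
            apply mul_le_mul_of_nonneg_left (mul_le_mul_of_nonneg_left h2 hC) (by positivity)
      _ = C * T ^ H * (lam * Real.exp (-(lam * (t - s)))) := by rw [neg_mul]; ring
    have hbBcont : Continuous (fun s => C * T ^ H * (lam * Real.exp (-(lam * (t - s))))) := by
      fun_prop
    have h1 := key _ hbBcont hbB
    have intB : (∫ s in (0:ℝ)..t, C * T ^ H * (lam * Real.exp (-(lam * (t - s)))))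
        = C * T ^ H * lam * ∫ s in (0:ℝ)..t, Real.exp (-(lam * (t - s))) := by
      rw [← intervalIntegral.integral_const_mul]
      congr 1; ext s; ring
    have subst : (∫ s in (0:ℝ)..t, Real.exp (-(lam * (t - s))))
        = ∫ u in (0:ℝ)..t, Real.exp (-(lam * u)) := by
      have h := intervalIntegral.integral_comp_sub_left
        (a := (0:ℝ)) (b := t) (fun u => Real.exp (-(lam * u))) t
      simpa using h
    have hI0 : (0:ℝ) ≤ ∫ u in (0:ℝ)..t, Real.exp (-(lam * u)) :=
      intervalIntegral.integral_nonneg ht0 (fun u _ => (Real.exp_pos _).le)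
    have hI2 : (∫ u in (0:ℝ)..t, Real.exp (-(lam * u))) ≤ 1/lam := by
      have := h_int_exp hl ht0
      simpa using this
    have hcoef : (0:ℝ) ≤ C * T ^ H * lam := by positivity
    calc ‖∫ s in (0:ℝ)..t, g s‖ ≤ |∫ s in (0:ℝ)..t,
          C * T ^ H * (lam * Real.exp (-(lam * (t - s))))| := h1
    _ = C * T ^ H * lam * ∫ u in (0:ℝ)..t, Real.exp (-(lam * u)) := by
          rw [intB, subst, abs_of_nonneg (mul_nonneg hcoef hI0)]
    _ ≤ C * T ^ H * lam * (1/lam) := mul_le_mul_of_nonneg_left hI2 hcoef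
    _ = C * T ^ H := by field_simp
  refine le_min ?_ ?_
  · calc (∫ s in (0:ℝ)..t, g s) + Real.exp (-lam * t) * f t
        ≤ ‖∫ s in (0:ℝ)..t, g s‖ + Real.exp (-lam * t) * f t := by
          have := le_abs_self (∫ s in (0:ℝ)..t, g s); rw [Real.norm_eq_abs]; linarith
    _ ≤ 4 * C * lam ^ (-H) + C * lam ^ (-H) := add_le_add claimA hsec1
    _ = 5 * C * lam ^ (-H) := by ring
  · calc (∫ s in (0:ℝ)..t, g s) + Real.exp (-lam * t) * f t
        ≤ ‖∫ s in (0:ℝ)..t, g s‖ + Real.exp (-lam * t) * f t := by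
          have := le_abs_self (∫ s in (0:ℝ)..t, g s); rw [Real.norm_eq_abs]; linarith
    _ ≤ C * T ^ H + C * T ^ H := add_le_add claimB hsec2
    _ = 2 * C * T ^ H := by ring
end
section chaining
open Set Filter Topology

/-- dyadic approximation from below -/
noncomputable def dy (T : ℝ) (m : ℕ) (t : ℝ) : ℝ := (⌊t * 2^m / T⌋₊ : ℝ) * T / 2^m

variable {f : ℝ → ℝ} {T H u : ℝ}

lemma dy_nonneg (hT : 0 < T) (m : ℕ) (t : ℝ) : 0 ≤ dy T m t := by
  unfold dy; positivity

lemma dy_le (hT : 0 < T) (m : ℕ) {t : ℝ} (ht : 0 ≤ t) : dy T m t ≤ t := by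
  unfold dy
  rw [div_le_iff₀ (by positivity)]
  have h := Nat.floor_le (show (0:ℝ) ≤ t * 2^m / T by positivity)
  calc (⌊t * 2^m / T⌋₊ : ℝ) * T ≤ (t * 2^m / T) * T :=
        mul_le_mul_of_nonneg_right h hT.le
  _ = t * 2^m := by field_simp

lemma dy_gt (hT : 0 < T) (m : ℕ) (t : ℝ) : t - T / 2^m < dy T m t := by
  unfold dy
  have h := Nat.lt_floor_add_one (t * 2^m / T)
  have h2 : t * 2^m < ((⌊t * 2^m / T⌋₊:ℝ) + 1) * T := by
    rw [← div_lt_iff₀ hT]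
    exact h
  rw [sub_lt_iff_lt_add, ← add_div, lt_div_iff₀ (show (0:ℝ) < 2^m by positivity)]
  nlinarith

lemma dy_tendsto (hT : 0 < T) {t : ℝ} (ht : 0 ≤ t) :
    Tendsto (fun m : ℕ => dy T m t) atTop (𝓝 t) := by
  have hlow : Tendsto (fun m : ℕ => t - T / 2^m) atTop (𝓝 t) := by
    have h0 : Tendsto (fun m : ℕ => T / 2^m) atTop (𝓝 0) := by
      have he : (fun m : ℕ => T / 2^m) = fun m : ℕ => T * (1/2:ℝ)^m := by
        ext m; rw [div_pow]; ring
      rw [he]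
      have := tendsto_pow_atTop_nhds_zero_of_lt_one (by norm_num : (0:ℝ) ≤ 1/2) (by norm_num)
      simpa using this.const_mul T
    have := (tendsto_const_nhds (x := t) (f := atTop (α := ℕ))).sub h0
    simpa using this
  exact tendsto_of_tendsto_of_tendsto_of_le_of_le hlow tendsto_const_nhds
    (fun m => (dy_gt hT m t).le) (fun m => dy_le hT m ht)

lemma dy_step (hT : 0 < T) (hH : 0 < H) (hu : 0 ≤ u)
    (hd : ∀ n k : ℕ, k < 2^n → |f (((k:ℝ)+1) * T / 2^n) - f ((k:ℝ) * T / 2^n)| ≤ u * (T / 2^n) ^ H)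
    {t : ℝ} (ht : 0 ≤ t) (htT : t ≤ T) (m : ℕ) :
    |f (dy T (m+1) t) - f (dy T m t)| ≤ u * (T / 2^(m+1)) ^ H := by
  have h2m : (0:ℝ) < 2^m := by positivity
  set km := ⌊t * 2^m / T⌋₊ with hkm
  set km' := ⌊t * 2^(m+1) / T⌋₊ with hkm'
  have hx : (km:ℝ) ≤ t * 2^m / T := Nat.floor_le (by positivity)
  have hcases : km' = 2 * km ∨ km' = 2 * km + 1 := by
    have h1 : 2 * km ≤ km' := by
      apply Nat.le_floor
      push_cast
      calc (2:ℝ) * (km:ℝ) ≤ 2 * (t * 2^m / T) := by linarith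
      _ = t * 2^(m+1) / T := by rw [pow_succ]; ring
    have h2 : km' < 2 * km + 2 := by
      rw [hkm', Nat.floor_lt (by positivity)]
      have h3 := Nat.lt_floor_add_one (t * 2^m / T)
      push_cast
      calc t * 2^(m+1) / T = 2 * (t * 2^m / T) := by rw [pow_succ]; ring
      _ < 2 * ((km:ℝ) + 1) := by rw [hkm]; linarith
      _ = 2 * (km:ℝ) + 2 := by ring
    omega
  have hpow : (0:ℝ) ≤ u * (T / 2^(m+1)) ^ H := by positivity
  rcases hcases with h | h
  · have he : dy T (m+1) t = dy T m t := by
      unfold dy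
      rw [← hkm, ← hkm', h]
      push_cast
      rw [pow_succ]
      field_simp
    rw [he, sub_self, abs_zero]
    exact hpow
  · have hklt : km < 2^m := by
      by_contra hge
      push_neg at hge
      have hle : (km:ℝ) ≤ 2^m := by
        calc (km:ℝ) ≤ t * 2^m / T := hx
        _ ≤ 2^m := by rw [div_le_iff₀ hT]; nlinarith
      have hkeq : (km:ℝ) = 2^m := by
        have hge' : ((2:ℝ))^m ≤ (km:ℝ) := by exact_mod_cast hge
        linarith
      have htT' : t = T := by
        have h1 : (2:ℝ)^m ≤ t * 2^m / T := by
          calc (2:ℝ)^m = (km:ℝ) := hkeq.symm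
          _ ≤ t * 2^m / T := hx
        have h2 : T ≤ t := by
          rw [le_div_iff₀ hT] at h1
          nlinarith
        linarith
      have hkeqN : km = 2^m := by exact_mod_cast hkeq
      have hc : km' = 2 * km := by
        have e : t * 2^(m+1)/T = ((2^(m+1):ℕ):ℝ) := by
          rw [htT']; push_cast; field_simp
        rw [hkm', e, Nat.floor_natCast, hkeqN, pow_succ]
        ring
      omega
    have hstep := hd (m+1) (2*km) (by rw [pow_succ]; omega)
    have e1 : dy T (m+1) t = (((2*km:ℕ):ℝ) + 1) * T / 2^(m+1) := by
      unfold dy; rw [← hkm', h]; push_cast; ring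
    have e2 : dy T m t = ((2*km:ℕ):ℝ) * T / 2^(m+1) := by
      unfold dy; rw [← hkm]; push_cast; rw [pow_succ]
      field_simp
    rw [e1, e2]
    exact hstep
end chaining
section chaining2
open Set Filter Topology

variable {f : ℝ → ℝ} {T H u : ℝ}

lemma pow_fact (hT : 0 < T) (H : ℝ) (n : ℕ) :
    (T / 2^n : ℝ) ^ H = T ^ H * ((2:ℝ) ^ (-H)) ^ n := by
  have h1 : ((2:ℝ)^(n:ℕ) : ℝ) ^ H = (2:ℝ) ^ ((n:ℝ)*H) := by
    rw [← Real.rpow_natCast (2:ℝ) n, ← Real.rpow_mul (by norm_num)]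
  have h2 : ((2:ℝ)^(-H))^(n:ℕ) = (2:ℝ) ^ (-((n:ℝ)*H)) := by
    rw [← Real.rpow_natCast ((2:ℝ)^(-H)) n, ← Real.rpow_mul (by norm_num)]
    congr 1; ring
  rw [Real.div_rpow hT.le (by positivity), h1, h2,
    Real.rpow_neg (by norm_num : (0:ℝ) ≤ 2), div_eq_mul_inv]

lemma dy_tail (hT : 0 < T) (hH : 0 < H) (hu : 0 ≤ u)
    (hf : ContinuousOn f (Set.Ici 0))
    (hd : ∀ n k : ℕ, k < 2^n → |f (((k:ℝ)+1) * T / 2^n) - f ((k:ℝ) * T / 2^n)| ≤ u * (T / 2^n) ^ H)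
    {t : ℝ} (ht : 0 ≤ t) (htT : t ≤ T) (m : ℕ) :
    |f t - f (dy T m t)| ≤ u * T ^ H * ((2:ℝ)^(-H))^(m+1) / (1 - (2:ℝ)^(-H)) := by
  set x : ℝ := (2:ℝ) ^ (-H) with hxdef
  have hx0 : 0 < x := Real.rpow_pos_of_pos (by norm_num) _
  have hx1 : x < 1 := by
    apply Real.rpow_lt_one_of_one_lt_of_neg (by norm_num)
    linarith
  have hgeom : ∀ j : ℕ, (∑ i ∈ Finset.range j, x^i) ≤ (1-x)⁻¹ := by
    intro j
    rw [geom_sum_eq hx1.ne j]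
    rw [div_le_iff_of_neg (by linarith)]
    have hm1 : (1-x)⁻¹ * (x-1) = -1 := by
      rw [show x - 1 = -(1-x) by ring, mul_neg, inv_mul_cancel₀ (by linarith : (1:ℝ)-x ≠ 0)]
    linarith [pow_nonneg hx0.le j]
  -- induction bound
  have hstep : ∀ j : ℕ, |f (dy T (m+j) t) - f (dy T m t)|
      ≤ u * T^H * x^(m+1) * (∑ i ∈ Finset.range j, x^i) := by
    intro j
    induction j with
    | zero => simp
    | succ j ih =>
      have h1 := dy_step hT hH hu hd ht htT (m+j)
      rw [pow_fact hT H (m+j+1)] at h1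
      calc |f (dy T (m+(j+1)) t) - f (dy T m t)|
          ≤ |f (dy T (m+j+1) t) - f (dy T (m+j) t)| + |f (dy T (m+j) t) - f (dy T m t)| := by
            rw [show m+(j+1) = m+j+1 by ring]
            exact abs_sub_le _ _ _
        _ ≤ u * (T^H * x^(m+j+1)) + u * T^H * x^(m+1) * (∑ i ∈ Finset.range j, x^i) := by
            exact add_le_add h1 ih
        _ = u * T^H * x^(m+1) * (∑ i ∈ Finset.range (j+1), x^i) := by
            rw [Finset.sum_range_succ]
            rw [show m+j+1 = (m+1)+j by ring, pow_add]
            ring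
  have hbound : ∀ j : ℕ, |f (dy T (m+j) t) - f (dy T m t)| ≤ u * T^H * x^(m+1) * (1-x)⁻¹ := by
    intro j
    refine (hstep j).trans ?_
    exact mul_le_mul_of_nonneg_left (hgeom j) (by positivity)
  -- limit
  have htend : Tendsto (fun j : ℕ => f (dy T (m+j) t)) atTop (𝓝 (f t)) := by
    have h1 : Tendsto (fun j : ℕ => dy T (m+j) t) atTop (𝓝 t) := by
      have := (dy_tendsto hT ht).comp (tendsto_add_atTop_nat m)
      simpa [Function.comp_def, Nat.add_comm] using this
    have h2 : Tendsto (fun j : ℕ => dy T (m+j) t) atTop (𝓝[Set.Ici 0] t) := by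
      rw [tendsto_nhdsWithin_iff]
      exact ⟨h1, Filter.Eventually.of_forall (fun j => dy_nonneg hT _ t)⟩
    exact ((hf t ht).tendsto).comp h2
  have htend2 : Tendsto (fun j : ℕ => |f (dy T (m+j) t) - f (dy T m t)|) atTop
      (𝓝 (|f t - f (dy T m t)|)) := by
    exact ((htend.sub tendsto_const_nhds).abs)
  have hfin := le_of_tendsto htend2 (Filter.Eventually.of_forall hbound)
  calc |f t - f (dy T m t)| ≤ u * T^H * x^(m+1) * (1-x)⁻¹ := hfin
  _ = u * T ^ H * x^(m+1) / (1 - x) := by rw [div_eq_mul_inv]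
end chaining2
section chaining3
open Set Filter Topology

variable {f : ℝ → ℝ} {T H u : ℝ}

lemma dy_mid (hT : 0 < T) (hH : 0 < H) (hu : 0 ≤ u)
    (hd : ∀ n k : ℕ, k < 2^n → |f (((k:ℝ)+1) * T / 2^n) - f ((k:ℝ) * T / 2^n)| ≤ u * (T / 2^n) ^ H)
    {s t : ℝ} (hs : 0 ≤ s) (hst : s ≤ t) (htT : t ≤ T) (m : ℕ)
    (hclose : t - s ≤ T / 2^m) :
    |f (dy T m t) - f (dy T m s)| ≤ u * (T / 2^m) ^ H := by
  have h2m : (0:ℝ) < 2^m := by positivity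
  have ht : 0 ≤ t := hs.trans hst
  set ks := ⌊s * 2^m / T⌋₊ with hks
  set kt := ⌊t * 2^m / T⌋₊ with hkt
  have hmono : ks ≤ kt := Nat.floor_le_floor (by gcongr)
  have h0' : t * 2^m ≤ s * 2^m + T := by
    have h0 : (t - s) * 2^m ≤ T := (le_div_iff₀ h2m).mp hclose
    nlinarith
  have hup : kt ≤ ks + 1 := by
    have h1 : t * 2^m / T ≤ s * 2^m / T + 1 := by
      have e : (s * 2^m / T + 1) * T = s * 2^m + T := by field_simp
      rw [div_le_iff₀ hT, e]
      exact h0'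
    calc kt ≤ ⌊s * 2^m / T + 1⌋₊ := Nat.floor_le_floor h1
    _ = ks + 1 := Nat.floor_add_one (by positivity)
  rcases Nat.eq_or_lt_of_le hmono with heq | hlt
  · have : dy T m t = dy T m s := by
      unfold dy; rw [← hks, ← hkt, heq]
    rw [this, sub_self, abs_zero]
    positivity
  · have hkeq : kt = ks + 1 := le_antisymm hup hlt
    have hkslt : ks < 2^m := by
      have h1 : (kt:ℝ) ≤ 2^m := by
        calc (kt:ℝ) ≤ t * 2^m / T := Nat.floor_le (by positivity)
        _ ≤ 2^m := by rw [div_le_iff₀ hT]; nlinarith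
      have h2 : kt ≤ 2^m := by exact_mod_cast h1
      omega
    have hstep := hd m ks hkslt
    have e1 : dy T m t = ((ks:ℝ) + 1) * T / 2^m := by
      unfold dy; rw [← hkt, hkeq]; push_cast; ring
    have e2 : dy T m s = (ks:ℝ) * T / 2^m := by
      unfold dy; rw [← hks]
    rw [e1, e2]
    exact hstep

/-- The chaining lemma: dyadic increment bounds imply a Hölder bound. -/
lemma chaining (hT : 0 < T) (hH : 0 < H) (hH1 : H < 1) (hu : 0 ≤ u)
    (hf : ContinuousOn f (Set.Ici 0))
    (hd : ∀ n k : ℕ, k < 2^n → |f (((k:ℝ)+1) * T / 2^n) - f ((k:ℝ) * T / 2^n)| ≤ u * (T / 2^n) ^ H) :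
    ∀ s t : ℝ, 0 ≤ s → s ≤ t → t ≤ T →
      |f t - f s| ≤ ((2 + 2 / (1 - (2:ℝ)^(-H))) * u) * (t - s) ^ H := by
  intro s t hs hst htT
  set x : ℝ := (2:ℝ) ^ (-H) with hxdef
  have hx0 : 0 < x := Real.rpow_pos_of_pos (by norm_num) _
  have hx1 : x < 1 := Real.rpow_lt_one_of_one_lt_of_neg (by norm_num) (by linarith)
  have ht0 : 0 ≤ t := hs.trans hst
  rcases eq_or_lt_of_le hst with heq | hlt
  · rw [← heq, sub_self, sub_self, abs_zero, Real.zero_rpow hH.ne', mul_zero]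
  · have hts : 0 < t - s := by linarith
    have htsT : t - s ≤ T := by linarith
    set q := ⌊T / (t - s)⌋₊ with hq
    have hq1 : 1 ≤ q := by
      apply Nat.le_floor
      rw [Nat.cast_one, le_div_iff₀ hts]
      linarith
    set m := Nat.log 2 q with hm
    have h2mq : (2:ℝ)^m ≤ T / (t - s) := by
      have h1 : 2^m ≤ q := Nat.pow_log_le_self 2 (by omega)
      calc ((2:ℝ))^m = ((2^m : ℕ) : ℝ) := by push_cast; ring
      _ ≤ (q : ℝ) := by exact_mod_cast h1
      _ ≤ T / (t - s) := Nat.floor_le (by positivity)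
    have h2mq' : T / (t - s) < 2^(m+1) := by
      have h1 : q < 2^(m+1) := Nat.lt_pow_succ_log_self (by norm_num) q
      have h2 : q + 1 ≤ 2^(m+1) := h1
      calc T / (t - s) < (q:ℝ) + 1 := Nat.lt_floor_add_one _
      _ ≤ ((2^(m+1) : ℕ) : ℝ) := by exact_mod_cast h2
      _ = 2^(m+1) := by push_cast; ring
    have hts1 : t - s ≤ T / 2^m := by
      rw [le_div_iff₀ (by positivity)]
      rw [le_div_iff₀ hts] at h2mq
      linarith
    have hts2 : T / 2^(m+1) < t - s := by
      rw [div_lt_iff₀ (by positivity)]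
      rw [div_lt_iff₀ hts] at h2mq'
      linarith
    -- three-term bound
    have htail_t := dy_tail hT hH hu hf hd ht0 htT m
    have htail_s := dy_tail hT hH hu hf hd hs (by linarith) m
    have hmid := dy_mid hT hH hu hd hs hst htT m hts1
    have key : |f t - f s| ≤ |f t - f (dy T m t)| + |f (dy T m t) - f (dy T m s)|
        + |f (dy T m s) - f s| := by
      have h1 := abs_sub_le (f t) (f (dy T m t)) (f s)
      have h2 := abs_sub_le (f (dy T m t)) (f (dy T m s)) (f s)
      linarith
    -- convert bounds
    have hpowm1 : u * T^H * x^(m+1) / (1 - x) = u * (T / 2^(m+1))^H / (1 - x) := by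
      rw [pow_fact hT H (m+1)]; ring
    have hmono1 : (T / 2^(m+1) : ℝ)^H ≤ (t - s)^H :=
      Real.rpow_le_rpow (by positivity) hts2.le hH.le
    have htail_bound : u * T^H * x^(m+1) / (1 - x) ≤ u * (t-s)^H / (1 - x) := by
      rw [hpowm1]
      gcongr
    have hmid2 : u * (T / 2^m)^H ≤ 2 * u * (t-s)^H := by
      have e : (T / 2^m : ℝ) = 2 * (T / 2^(m+1)) := by
        rw [pow_succ]; field_simp
      have h2H : (2:ℝ)^(H:ℝ) ≤ 2 := by
        calc (2:ℝ)^(H:ℝ) ≤ (2:ℝ)^(1:ℝ) := Real.rpow_le_rpow_of_exponent_le one_le_two hH1.le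
        _ = 2 := Real.rpow_one 2
      calc u * (T / 2^m)^H = u * ((2:ℝ)^(H:ℝ) * (T / 2^(m+1))^H) := by
            rw [e, Real.mul_rpow (by norm_num) (by positivity)]
      _ ≤ u * (2 * (t-s)^H) := by
            apply mul_le_mul_of_nonneg_left ?_ hu
            exact mul_le_mul h2H hmono1 (by positivity) (by norm_num)
      _ = 2 * u * (t-s)^H := by ring
    have h1 := htail_t.trans htail_bound
    have h2' : |f (dy T m s) - f s| ≤ u * (t-s)^H / (1 - x) := by
      rw [abs_sub_comm]
      exact htail_s.trans htail_bound
    have h3 := hmid.trans hmid2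
    calc |f t - f s| ≤ |f t - f (dy T m t)| + |f (dy T m t) - f (dy T m s)|
        + |f (dy T m s) - f s| := key
    _ ≤ u * (t-s)^H / (1 - x) + 2 * u * (t-s)^H + u * (t-s)^H / (1 - x) := by
        linarith
    _ = ((2 + 2 / (1 - x)) * u) * (t - s) ^ H := by ring
end chaining3
section gauss
open MeasureTheory ProbabilityTheory Real

lemma gauss_tail {Ω : Type*} [MeasurableSpace Ω] (P : Measure Ω) [IsProbabilityMeasure P]
    {X : Ω → ℝ} (hX : Measurable X) {v : NNReal} (hv : 0 < (v:ℝ))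
    (hmap : P.map X = gaussianReal 0 v) {r : ℝ} (hr : 0 ≤ r) :
    P {ω | r < |X ω|} ≤ ENNReal.ofReal (2 * Real.exp (-r^2 / (4*(v:ℝ)))) := by
  have hv0 : v ≠ 0 := by
    intro h; rw [h] at hv; simp at hv
  have hS : MeasurableSet {x : ℝ | r < |x|} := by
    have : {x : ℝ | r < |x|} = (fun x : ℝ => |x|) ⁻¹' (Set.Ioi r) := rfl
    rw [this]
    exact (continuous_abs.measurable) measurableSet_Ioi
  have h1 : P {ω | r < |X ω|} = (P.map X) {x | r < |x|} := by
    rw [Measure.map_apply hX hS]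
    rfl
  set c := Real.exp (-r^2/(4*(v:ℝ))) with hcdef
  have hc0 : 0 < c := Real.exp_pos _
  set b := 1/(4*(v:ℝ)) with hbdef
  have hb0 : 0 < b := by positivity
  set h : ℝ → ℝ := fun x => (Real.sqrt (2*π*(v:ℝ)))⁻¹ * c * Real.exp (-b * x^2) with hhdef
  have hsqrt0 : 0 < Real.sqrt (2*π*(v:ℝ)) := Real.sqrt_pos.mpr (by positivity)
  have hbound : ∀ x ∈ {x : ℝ | r < |x|}, gaussianPDF 0 v x ≤ ENNReal.ofReal (h x) := by
    intro x hx
    simp only [Set.mem_setOf_eq] at hx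
    apply ENNReal.ofReal_le_ofReal
    rw [hhdef]
    simp only []
    unfold gaussianPDFReal
    rw [sub_zero]
    have hx2 : r^2 ≤ x^2 := by
      have h1 : r ≤ |x| := hx.le
      have h2 : r * r ≤ |x| * |x| := mul_le_mul h1 h1 hr (abs_nonneg x)
      nlinarith [sq_abs x]
    have hexp : Real.exp (-x^2/(2*(v:ℝ))) ≤ c * Real.exp (-b * x^2) := by
      rw [hcdef, ← Real.exp_add]
      apply Real.exp_le_exp.mpr
      rw [hbdef]
      rw [← sub_nonneg]
      have hvne : (v:ℝ) ≠ 0 := hv.ne'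
      have e : (-r^2/(4*(v:ℝ)) + -(1/(4*(v:ℝ))) * x^2) - (-x^2/(2*(v:ℝ)))
          = (x^2 - r^2)/(4*(v:ℝ)) := by
        field_simp
        ring
      rw [e]
      apply div_nonneg (by linarith) (by positivity)
    calc (Real.sqrt (2*π*(v:ℝ)))⁻¹ * Real.exp (-x^2/(2*(v:ℝ)))
        ≤ (Real.sqrt (2*π*(v:ℝ)))⁻¹ * (c * Real.exp (-b * x^2)) := by
          exact mul_le_mul_of_nonneg_left hexp (by positivity)
    _ = (Real.sqrt (2*π*(v:ℝ)))⁻¹ * c * Real.exp (-b * x^2) := by ring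
  -- integral computation
  have hint : Integrable h := by
    rw [hhdef]
    exact (integrable_exp_neg_mul_sq hb0).const_mul _
  have hnn : 0 ≤ᵐ[volume] h := by
    apply Filter.Eventually.of_forall
    intro x
    rw [hhdef]
    positivity
  have hintval : ∫ x, h x = ((Real.sqrt (2*π*(v:ℝ)))⁻¹ * c) * Real.sqrt (π / b) := by
    rw [hhdef]
    rw [integral_const_mul]
    rw [integral_gaussian b]
  have hsqrtle : ((Real.sqrt (2*π*(v:ℝ)))⁻¹ * c) * Real.sqrt (π / b) ≤ 2 * c := by
    have e1 : π / b = (2*π*(v:ℝ)) * 2 := by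
      rw [hbdef]; field_simp; ring
    have e2 : Real.sqrt (π / b) = Real.sqrt (2*π*(v:ℝ)) * Real.sqrt 2 := by
      rw [e1, Real.sqrt_mul (by positivity)]
    have e3 : (Real.sqrt (2*π*(v:ℝ)))⁻¹ * Real.sqrt (2*π*(v:ℝ)) = 1 :=
      inv_mul_cancel₀ hsqrt0.ne'
    have hs2 : Real.sqrt 2 ≤ 2 := by
      nlinarith [Real.sq_sqrt (show (0:ℝ) ≤ 2 by norm_num), Real.sqrt_nonneg 2]
    calc ((Real.sqrt (2*π*(v:ℝ)))⁻¹ * c) * Real.sqrt (π / b)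
        = ((Real.sqrt (2*π*(v:ℝ)))⁻¹ * Real.sqrt (2*π*(v:ℝ))) * c * Real.sqrt 2 := by
          rw [e2]; ring
    _ = c * Real.sqrt 2 := by rw [e3]; ring
    _ ≤ c * 2 := mul_le_mul_of_nonneg_left hs2 hc0.le
    _ = 2 * c := by ring
  calc P {ω | r < |X ω|} = (P.map X) {x | r < |x|} := h1
  _ = ∫⁻ x in {x : ℝ | r < |x|}, gaussianPDF 0 v x := by
      rw [hmap, gaussianReal_apply 0 hv0]
  _ ≤ ∫⁻ x in {x : ℝ | r < |x|}, ENNReal.ofReal (h x) := by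
      refine setLIntegral_mono ?_ hbound
      exact ((measurable_const.mul ((measurable_id.pow_const 2).const_mul (-b)).exp)).ennreal_ofReal
  _ ≤ ∫⁻ x, ENNReal.ofReal (h x) := setLIntegral_le_lintegral _ _
  _ = ENNReal.ofReal (∫ x, h x) :=
      (MeasureTheory.ofReal_integral_eq_lintegral_ofReal hint hnn).symm
  _ ≤ ENNReal.ofReal (2 * c) := by
      apply ENNReal.ofReal_le_ofReal
      rw [hintval]
      exact hsqrtle
end gauss
section series
open Real

lemma series_pt {c a u : ℝ} (hc : 0 < c) (ha : 0 < a) (hbig : 2 ≤ c*a*u^2) (n : ℕ) :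
    (2:ℝ)^n * (2 * Real.exp (-(c*u^2) * ((2:ℝ)^a)^n))
      ≤ (2 * Real.exp (-(c*u^2))) * (1/2)^n := by
  have hln2 : 0 < Real.log 2 := Real.log_pos (by norm_num)
  have hcu : 0 ≤ c*u^2 := by positivity
  have hw : ((2:ℝ)^a)^n = Real.exp ((n:ℝ) * (a * Real.log 2)) := by
    rw [← Real.rpow_natCast ((2:ℝ)^a) n, ← Real.rpow_mul (by norm_num : (0:ℝ) ≤ 2),
      Real.rpow_def_of_pos (by norm_num : (0:ℝ) < 2)]
    congr 1; ring
  have hwge : (1:ℝ) + (n:ℝ)*(a*Real.log 2) ≤ ((2:ℝ)^a)^n := by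
    rw [hw]; linarith [Real.add_one_le_exp ((n:ℝ)*(a*Real.log 2))]
  have h4 : ((4:ℝ))^n = Real.exp ((n:ℝ) * (2*Real.log 2)) := by
    rw [Real.exp_nat_mul]
    congr 1
    rw [show (2:ℝ)*Real.log 2 = Real.log 2 + Real.log 2 by ring, Real.exp_add,
      Real.exp_log (by norm_num : (0:ℝ) < 2)]
    norm_num
  have hkey : Real.exp (-(c*u^2) * ((2:ℝ)^a)^n) ≤ Real.exp (-(c*u^2)) * (1/4)^n := by
    have hexp_mono : -(c*u^2) * ((2:ℝ)^a)^n ≤ -(c*u^2) + (-((n:ℝ)*(2*Real.log 2))) := by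
      have hnl : (0:ℝ) ≤ (n:ℝ)*Real.log 2 := by positivity
      have h1 : c*u^2*((n:ℝ)*(a*Real.log 2)) ≤ c*u^2*(((2:ℝ)^a)^n - 1) := by
        apply mul_le_mul_of_nonneg_left _ hcu
        linarith
      have h3 : 2*((n:ℝ)*Real.log 2) ≤ (c*a*u^2)*((n:ℝ)*Real.log 2) :=
        mul_le_mul_of_nonneg_right hbig hnl
      nlinarith
    calc Real.exp (-(c*u^2) * ((2:ℝ)^a)^n)
        ≤ Real.exp (-(c*u^2) + (-((n:ℝ)*(2*Real.log 2)))) := Real.exp_le_exp.mpr hexp_mono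
    _ = Real.exp (-(c*u^2)) * Real.exp (-((n:ℝ)*(2*Real.log 2))) := Real.exp_add _ _
    _ = Real.exp (-(c*u^2)) * (1/4)^n := by
        congr 1
        rw [Real.exp_neg, ← h4, one_div, inv_pow]
  calc (2:ℝ)^n * (2 * Real.exp (-(c*u^2) * ((2:ℝ)^a)^n))
      ≤ (2:ℝ)^n * (2 * (Real.exp (-(c*u^2)) * (1/4)^n)) := by
        apply mul_le_mul_of_nonneg_left _ (by positivity)
        exact mul_le_mul_of_nonneg_left hkey (by norm_num)
  _ = (2 * Real.exp (-(c*u^2))) * ((2:ℝ)^n * (1/4)^n) := by ring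
  _ = (2 * Real.exp (-(c*u^2))) * (1/2)^n := by
      rw [← mul_pow]
      norm_num

lemma tsum_series_bound {c a u : ℝ} (hc : 0 < c) (ha : 0 < a) (hbig : 2 ≤ c*a*u^2) :
    (∑' n : ℕ, ENNReal.ofReal ((2:ℝ)^n * (2 * Real.exp (-(c*u^2) * ((2:ℝ)^a)^n))))
      ≤ ENNReal.ofReal (4 * Real.exp (-(c*u^2))) := by
  have hsum : Summable (fun n : ℕ => (2 * Real.exp (-(c*u^2))) * (1/2:ℝ)^n) :=
    (summable_geometric_of_lt_one (by norm_num) (by norm_num)).mul_left _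
  calc (∑' n : ℕ, ENNReal.ofReal ((2:ℝ)^n * (2 * Real.exp (-(c*u^2) * ((2:ℝ)^a)^n))))
      ≤ ∑' n : ℕ, ENNReal.ofReal ((2 * Real.exp (-(c*u^2))) * (1/2:ℝ)^n) :=
        ENNReal.tsum_le_tsum (fun n => ENNReal.ofReal_le_ofReal (series_pt hc ha hbig n))
  _ = ENNReal.ofReal (∑' n : ℕ, (2 * Real.exp (-(c*u^2))) * (1/2:ℝ)^n) :=
        (ENNReal.ofReal_tsum_of_nonneg (fun n => by positivity) hsum).symm
  _ = ENNReal.ofReal (4 * Real.exp (-(c*u^2))) := by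
        congr 1
        rw [tsum_mul_left, tsum_geometric_of_lt_one (by norm_num) (by norm_num)]
        norm_num
        ring
end series

set_option maxHeartbeats 1000000 in
/-- Uniform tail bound for the exponential stochastic convolution of Brownian motion:
for a standard one-dimensional Brownian motion `W`, every `δ ∈ (0,1/2)` and `T > 0`, there
exist `C₁, C₂ > 0` depending only on `δ, T` such that for all `λ > 0` and `R ≥ 0`,
`P(sup_{0 ≤ t ≤ T} Z_λ(t) ≥ λ^{−δ} R) ≤ C₁ e^{−C₂ R²}`. -/
theorem stochastic_convolution_tail_bound
    {Ω : Type*} [MeasurableSpace Ω] (P : Measure Ω) [IsProbabilityMeasure P]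
    (W : ℝ → Ω → ℝ)
    (hmeas : ∀ t : ℝ, Measurable (W t))
    (hcont : ∀ ω : Ω, ContinuousOn (fun t => W t ω) (Set.Ici (0:ℝ)))
    (hW0 : ∀ ω : Ω, W 0 ω = 0)
    (hincr : ∀ s t : ℝ, 0 ≤ s → s ≤ t →
      P.map (fun ω => W t ω - W s ω) = ProbabilityTheory.gaussianReal 0 (t - s).toNNReal)
    (hindep : ∀ (m : ℕ) (t : ℕ → ℝ), Monotone t → 0 ≤ t 0 →
      ProbabilityTheory.iIndepFun (m := fun _ : Fin m => Real.measurableSpace)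
        (fun (i : Fin m) (ω : Ω) => W (t ((i : ℕ) + 1)) ω - W (t (i : ℕ)) ω) P)
    (δ T : ℝ) (hδ : δ ∈ Set.Ioo (0:ℝ) (1/2)) (hT : 0 < T) :
    ∃ C₁ > (0:ℝ), ∃ C₂ > (0:ℝ), ∀ lam : ℝ, 0 < lam → ∀ R : ℝ, 0 ≤ R →
      (P {ω | lam ^ (-δ) * R ≤ ⨆ t : Set.Icc (0:ℝ) T, stochConv W lam (t : ℝ) ω}).toReal
        ≤ C₁ * Real.exp (-C₂ * R ^ 2) := by
  obtain ⟨hδ0, hδhalf⟩ := hδ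
  set H : ℝ := δ/2 + 1/4 with hHdef
  clear_value H
  have hδH : δ < H := by rw [hHdef]; linarith
  have hH0 : 0 < H := by rw [hHdef]; linarith
  have hHhalf : H < 1/2 := by rw [hHdef]; linarith
  have hH1 : H < 1 := by linarith
  have hx0 : (0:ℝ) < (2:ℝ)^(-H) := Real.rpow_pos_of_pos (by norm_num) _
  have hx1 : (2:ℝ)^(-H) < 1 := Real.rpow_lt_one_of_one_lt_of_neg (by norm_num) (by linarith)
  have hD : (0:ℝ) < 1 - (2:ℝ)^(-H) := by linarith
  set cH : ℝ := 2 + 2/(1 - (2:ℝ)^(-H)) with hcHdef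
  clear_value cH
  have hcH0 : 0 < cH := by
    rw [hcHdef]
    have := div_pos (by norm_num : (0:ℝ) < 2) hD
    linarith
  have hTH0 : (0:ℝ) < T^H := Real.rpow_pos_of_pos hT _
  set K : ℝ := 5 + 2*T^H with hKdef
  clear_value K
  have hK5 : (5:ℝ) ≤ K := by rw [hKdef]; linarith
  have hK2T : 2*T^H ≤ K := by rw [hKdef]; linarith
  have hK0 : (0:ℝ) < K := by linarith
  set a : ℝ := 1 - 2*H with hadef
  clear_value a
  have ha0 : 0 < a := by rw [hadef]; linarith
  have hT2H : (0:ℝ) < T^(2*H-1) := Real.rpow_pos_of_pos hT _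
  set c : ℝ := T^(2*H-1)/4 with hcdef
  clear_value c
  have hc0 : 0 < c := by rw [hcdef]; linarith
  have hdenom : (0:ℝ) < (2*K*cH)^2 := by positivity
  refine ⟨4 + Real.exp (2/a), by positivity, c/(2*K*cH)^2, by positivity, ?_⟩
  intro lam hlam R hR
  set u : ℝ := R/(2*K*cH) with hudef
  clear_value u
  have hu0 : 0 ≤ u := by rw [hudef]; positivity
  have hcu2 : c*u^2 = (c/(2*K*cH)^2) * R^2 := by
    rw [hudef, div_pow]
    ring
  set B : ℕ → ℕ → Set Ω := fun n k =>
    {ω | u * (T/2^n)^H < |W (((k:ℝ)+1)*T/2^n) ω - W ((k:ℝ)*T/2^n) ω|} with hBdef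
  -- probability of each bad event
  have hPB : ∀ n k : ℕ, k < 2^n →
      P (B n k) ≤ ENNReal.ofReal (2 * Real.exp (-(c*u^2) * ((2:ℝ)^a)^n)) := by
    intro n k _
    have hy : (0:ℝ) < T/2^n := by positivity
    have ht1 : (0:ℝ) ≤ (k:ℝ)*T/2^n := by positivity
    have ht2 : (k:ℝ)*T/2^n ≤ ((k:ℝ)+1)*T/2^n := by
      have h2n : (0:ℝ) < (2:ℝ)^n := by positivity
      rw [div_le_div_iff_of_pos_right h2n]
      nlinarith
    have hmap := hincr _ _ ht1 ht2
    have hdiff : ((k:ℝ)+1)*T/2^n - (k:ℝ)*T/2^n = T/2^n := by ring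
    rw [hdiff] at hmap
    have hvpos : (0:ℝ) < ((T/2^n).toNNReal : ℝ) := by
      rw [Real.coe_toNNReal _ hy.le]; exact hy
    have hXm : Measurable (fun ω => W (((k:ℝ)+1)*T/2^n) ω - W ((k:ℝ)*T/2^n) ω) :=
      (hmeas _).sub (hmeas _)
    have hgt := gauss_tail P hXm hvpos hmap (r := u * (T/2^n)^H) (by positivity)
    refine le_trans hgt (ENNReal.ofReal_le_ofReal ?_)
    have hexp_eq : (u*(T/2^n)^H)^2 / (4*(((T/2^n).toNNReal):ℝ)) = (c*u^2) * ((2:ℝ)^a)^n := by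
      rw [Real.coe_toNNReal _ hy.le]
      have e1 : ((T/2^n:ℝ)^H)^2 = (T/2^n)^(2*H) := by
        rw [← Real.rpow_natCast ((T/2^n)^H) 2, ← Real.rpow_mul hy.le]
        congr 1
        push_cast
        ring
      have e2 : (T/2^n:ℝ)^(2*H) / (T/2^n) = (T/2^n)^(2*H-1) := by
        rw [Real.rpow_sub hy, Real.rpow_one]
      have e3 := pow_fact hT (2*H-1) n
      have e4 : (2:ℝ)^(-(2*H-1)) = (2:ℝ)^a := by rw [hadef]; congr 1; ring
      calc (u*(T/2^n)^H)^2 / (4*(T/2^n))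
          = u^2 * ((T/2^n)^(2*H) / (T/2^n)) / 4 := by rw [mul_pow, e1]; ring
      _ = u^2 * (T/2^n)^(2*H-1) / 4 := by rw [e2]
      _ = u^2 * (T^(2*H-1) * ((2:ℝ)^a)^n) / 4 := by rw [e3, e4]
      _ = (c*u^2) * ((2:ℝ)^a)^n := by rw [hcdef]; ring
    have heq2 : -(u*(T/2^n)^H)^2 / (4*(((T/2^n).toNNReal):ℝ)) = -(c*u^2) * ((2:ℝ)^a)^n := by
      rw [neg_div, hexp_eq]
      ring
    rw [heq2]
  by_cases hbig : 2 ≤ c*a*u^2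
  · -- large deviation regime
    have hRpos : 0 < R := by
      rcases eq_or_lt_of_le hR with h | h
      · exfalso
        have hu' : u = 0 := by rw [hudef, ← h]; simp
        rw [hu'] at hbig
        norm_num at hbig
      · exact h
    -- inclusion of the event in the union of bad events
    have hincl : {ω | lam ^ (-δ) * R ≤ ⨆ t : Set.Icc (0:ℝ) T, stochConv W lam (t : ℝ) ω}
        ⊆ ⋃ n : ℕ, ⋃ k ∈ Finset.range (2^n), B n k := by
      intro ω hω
      by_contra hnot
      have hd : ∀ n k : ℕ, k < 2^n →
          |W (((k:ℝ)+1)*T/2^n) ω - W ((k:ℝ)*T/2^n) ω| ≤ u * (T/2^n)^H := by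
        intro n k hk
        by_contra hgt
        push_neg at hgt
        exact hnot (Set.mem_iUnion.mpr ⟨n, Set.mem_biUnion (Finset.mem_range.mpr hk) hgt⟩)
      have hHol := chaining hT hH0 hH1 hu0 (hcont ω) hd
      rw [← hcHdef] at hHol
      haveI : Nonempty (Set.Icc (0:ℝ) T) := ⟨⟨0, ⟨le_refl 0, hT.le⟩⟩⟩
      -- bounds on the convolution at each time
      have h5cHu : 5*(cH*u) ≤ R/2 := by
        have e : 5*(cH*u) = 5/(2*K)*R := by
          rw [hudef]; field_simp
        have h1 : (5:ℝ)/(2*K) ≤ 1/2 := by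
          rw [div_le_div_iff₀ (by positivity) (by norm_num)]
          linarith
        calc 5*(cH*u) = 5/(2*K)*R := e
        _ ≤ 1/2*R := mul_le_mul_of_nonneg_right h1 hR
        _ = R/2 := by ring
      have h2THcHu : 2*(cH*u)*T^H ≤ R/2 := by
        have e : 2*(cH*u)*T^H = (2*T^H)/(2*K)*R := by
          rw [hudef]; field_simp
        have h1 : (2*T^H)/(2*K) ≤ 1/2 := by
          rw [div_le_div_iff₀ (by positivity) (by norm_num)]
          linarith
        calc 2*(cH*u)*T^H = (2*T^H)/(2*K)*R := e
        _ ≤ 1/2*R := mul_le_mul_of_nonneg_right h1 hR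
        _ = R/2 := by ring
      have hbd : ∀ t : Set.Icc (0:ℝ) T, stochConv W lam (t:ℝ) ω ≤ (R/2) * lam^(-δ) := by
        intro t
        have hcb := conv_bound (f := fun r => W r ω) (C := cH*u) hT hH0 hH1 (hcont ω) (hW0 ω)
          (by positivity) hHol hlam t.2.1 t.2.2
        have hcb' : stochConv W lam (t:ℝ) ω ≤ min (5*(cH*u)*lam^(-H)) (2*(cH*u)*T^H) := hcb
        rcases le_or_gt 1 lam with hl1 | hl1
        · refine le_trans (hcb'.trans (min_le_left _ _)) ?_
          have h1 : lam^(-H) ≤ lam^(-δ) :=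
            Real.rpow_le_rpow_of_exponent_le hl1 (by linarith)
          exact mul_le_mul h5cHu h1 (Real.rpow_pos_of_pos hlam _).le (by linarith)
        · refine le_trans (hcb'.trans (min_le_right _ _)) ?_
          have h1 : (1:ℝ) ≤ lam^(-δ) := by
            have := Real.rpow_le_rpow_of_exponent_ge hlam hl1.le
              (show -δ ≤ 0 by linarith)
            rwa [Real.rpow_zero] at this
          calc 2*(cH*u)*T^H ≤ R/2 := h2THcHu
          _ = (R/2) * 1 := by ring
          _ ≤ (R/2) * lam^(-δ) := mul_le_mul_of_nonneg_left h1 (by linarith)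
      have hsup := ciSup_le hbd
      have hEω : lam^(-δ) * R ≤ ⨆ t : Set.Icc (0:ℝ) T, stochConv W lam (t:ℝ) ω := hω
      have hfin : lam^(-δ)*R ≤ (R/2)*lam^(-δ) := le_trans hEω hsup
      linarith [hfin, mul_pos (Real.rpow_pos_of_pos hlam (-δ)) hRpos]
    -- union bound
    have hchain : P {ω | lam ^ (-δ) * R ≤ ⨆ t : Set.Icc (0:ℝ) T, stochConv W lam (t : ℝ) ω}
        ≤ ENNReal.ofReal (4 * Real.exp (-(c*u^2))) := by
      calc P {ω | lam ^ (-δ) * R ≤ ⨆ t : Set.Icc (0:ℝ) T, stochConv W lam (t : ℝ) ω}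
          ≤ P (⋃ n : ℕ, ⋃ k ∈ Finset.range (2^n), B n k) := measure_mono hincl
      _ ≤ ∑' n : ℕ, P (⋃ k ∈ Finset.range (2^n), B n k) := measure_iUnion_le _
      _ ≤ ∑' n : ℕ, ENNReal.ofReal ((2:ℝ)^n * (2*Real.exp (-(c*u^2) * ((2:ℝ)^a)^n))) := by
          apply ENNReal.tsum_le_tsum
          intro n
          calc P (⋃ k ∈ Finset.range (2^n), B n k)
              ≤ ∑ k ∈ Finset.range (2^n), P (B n k) := measure_biUnion_finset_le _ _
          _ ≤ ∑ _k ∈ Finset.range (2^n),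
                ENNReal.ofReal (2*Real.exp (-(c*u^2) * ((2:ℝ)^a)^n)) := by
              apply Finset.sum_le_sum
              intro k hk
              exact hPB n k (Finset.mem_range.mp hk)
          _ = (2^n : ℕ) * ENNReal.ofReal (2*Real.exp (-(c*u^2) * ((2:ℝ)^a)^n)) := by
              rw [Finset.sum_const, Finset.card_range, nsmul_eq_mul]
          _ = ENNReal.ofReal ((2:ℝ)^n * (2*Real.exp (-(c*u^2) * ((2:ℝ)^a)^n))) := by
              have hcast : ((2^n : ℕ) : ENNReal) = ENNReal.ofReal ((2:ℝ)^n) := by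
                rw [← ENNReal.ofReal_natCast]
                congr 1
                push_cast
                ring
              rw [hcast, ← ENNReal.ofReal_mul (by positivity)]
      _ ≤ ENNReal.ofReal (4 * Real.exp (-(c*u^2))) := tsum_series_bound hc0 ha0 hbig
    have hfinal : P {ω | lam ^ (-δ) * R ≤ ⨆ t : Set.Icc (0:ℝ) T, stochConv W lam (t : ℝ) ω}
        ≤ ENNReal.ofReal ((4 + Real.exp (2/a)) * Real.exp (-(c/(2*K*cH)^2) * R^2)) := by
      refine hchain.trans (ENNReal.ofReal_le_ofReal ?_)
      have e : Real.exp (-(c/(2*K*cH)^2) * R^2) = Real.exp (-(c*u^2)) := by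
        congr 1
        rw [hcu2]
        ring
      rw [e]
      exact mul_le_mul_of_nonneg_right (by linarith [Real.exp_pos (2/a)])
        (Real.exp_pos _).le
    exact ENNReal.toReal_le_of_le_ofReal (by positivity) hfinal
  · -- small deviation regime: trivial bound by 1
    rw [not_le] at hbig
    have h1 : (P {ω | lam ^ (-δ) * R ≤ ⨆ t : Set.Icc (0:ℝ) T, stochConv W lam (t : ℝ) ω}).toReal
        ≤ 1 := by
      have := prob_le_one
        (μ := P) (s := {ω | lam ^ (-δ) * R ≤ ⨆ t : Set.Icc (0:ℝ) T, stochConv W lam (t : ℝ) ω})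
      exact ENNReal.toReal_le_of_le_ofReal (by norm_num) (by rwa [ENNReal.ofReal_one])
    have h2 : (1:ℝ) ≤ (4 + Real.exp (2/a)) * Real.exp (-(c/(2*K*cH)^2) * R^2) := by
      have e : Real.exp (-(c/(2*K*cH)^2) * R^2) = Real.exp (-(c*u^2)) := by
        congr 1
        rw [hcu2]
        ring
      rw [e]
      have hle : c*u^2 ≤ 2/a := by
        rw [le_div_iff₀ ha0]
        nlinarith
      have h3 : Real.exp (-(2/a)) ≤ Real.exp (-(c*u^2)) := Real.exp_le_exp.mpr (by linarith)
      have h4 : Real.exp (2/a) * Real.exp (-(2/a)) = 1 := by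
        rw [← Real.exp_add]; simp
      nlinarith [Real.exp_pos (-(c*u^2)), Real.exp_pos (2/a), Real.exp_pos (-(2/a))]
    linarith
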